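/- If M ≥ N and H has full column rank N, then there exists a global minimizer θ̂ of the LAV objective F such that at least N of the M residuals vanish, i.e., the set {i ∈ {1,…,M} : z_i = h_i·θ̂} has cardinality at least N. -/

import Mathlib

open Matrix Finset

lemma abs_key (r a t : ℝ) (h : |t| * |a| ≤ |r|) :
    |r - t * a| = |r| - t * (Real.sign r * a) := by
  have hm : |t * a| ≤ |r| := by rwa [abs_mul]
  rcases lt_trichotomy r 0 with hr | hr | hr
  · rw [Real.sign_of_neg hr]
    have h1 : r - t * a ≤ 0 := by
      have := neg_abs_le (t * a)
      have := abs_of_neg hr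
      linarith
    rw [abs_of_nonpos h1, abs_of_neg hr]; ring
  · subst hr
    have h2 : t * a = 0 := abs_eq_zero.mp (le_antisymm (by simpa using hm) (abs_nonneg _))
    simp [h2]
  · rw [Real.sign_of_pos hr]
    have h1 : 0 ≤ r - t * a := by
      have := le_abs_self (t * a)
      have := abs_of_pos hr
      linarith
    rw [abs_of_nonneg h1, abs_of_pos hr]; ring


lemma lav_exists_min {M N : ℕ} (H : Matrix (Fin M) (Fin N) ℝ) (z : Fin M → ℝ)
    (hinj : Function.Injective H.mulVecLin) :
    ∃ θ₀ : Fin N → ℝ, ∀ θ, (∑ i, |z i - H i ⬝ᵥ θ₀|) ≤ ∑ i, |z i - H i ⬝ᵥ θ| := by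
  set F : (Fin N → ℝ) → ℝ := fun θ => ∑ i, |z i - H i ⬝ᵥ θ| with hF
  have hFcont : Continuous F := by
    apply continuous_finset_sum
    intro i _
    apply continuous_abs.comp
    apply continuous_const.sub
    unfold dotProduct
    exact continuous_finset_sum _ fun j _ => continuous_const.mul (continuous_apply j)
  have hF0 : ∀ θ, 0 ≤ F θ := fun θ => Finset.sum_nonneg fun i _ => abs_nonneg _
  obtain ⟨K, hKpos, hanti⟩ := (H.mulVecLin.injective_iff_antilipschitz).mp hinj
  set C : ℝ := ∑ i, |z i| with hC
  have hC0 : 0 ≤ C := Finset.sum_nonneg fun i _ => abs_nonneg _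
  have hbound : ∀ θ, ‖H.mulVecLin θ‖ ≤ F θ + C := by
    intro θ
    rw [pi_norm_le_iff_of_nonneg (add_nonneg (hF0 θ) hC0)]
    intro i
    have h1 : ‖H.mulVecLin θ i‖ ≤ |z i - H i ⬝ᵥ θ| + |z i| := by
      have : H.mulVecLin θ i = H i ⬝ᵥ θ := rfl
      rw [this, Real.norm_eq_abs]
      have := abs_sub_abs_le_abs_sub (z i) (z i - H i ⬝ᵥ θ)
      have := abs_sub (z i) (H i ⬝ᵥ θ)
      calc |H i ⬝ᵥ θ| = |z i - (z i - H i ⬝ᵥ θ)| := by ring_nf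
        _ ≤ |z i| + |z i - H i ⬝ᵥ θ| := abs_sub _ _
        _ = |z i - H i ⬝ᵥ θ| + |z i| := by ring
    refine h1.trans (add_le_add ?_ ?_)
    · exact Finset.single_le_sum (f := fun j => |z j - H j ⬝ᵥ θ|) (fun j _ => abs_nonneg _) (mem_univ i)
    · exact Finset.single_le_sum (f := fun j => |z j|) (fun j _ => abs_nonneg _) (mem_univ i)
  set R : ℝ := K * (F 0 + C) with hR
  have hR0 : 0 ≤ R := mul_nonneg K.coe_nonneg (add_nonneg (hF0 0) hC0)
  obtain ⟨θ₀, hθ₀mem, hminon⟩ :=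
    (isCompact_closedBall (0 : Fin N → ℝ) R).exists_isMinOn
      ⟨0, Metric.mem_closedBall_self hR0⟩ hFcont.continuousOn
  refine ⟨θ₀, fun θ => ?_⟩
  by_contra hcon
  push_neg at hcon
  have hθ₀0 : F θ₀ ≤ F 0 := isMinOn_iff.mp hminon 0 (Metric.mem_closedBall_self hR0)
  have hnorm : ‖θ‖ ≤ R := by
    have h1 : dist θ 0 ≤ K * dist (H.mulVecLin θ) (H.mulVecLin 0) := hanti.le_mul_dist θ 0
    rw [map_zero, dist_zero_right, dist_zero_right] at h1
    calc ‖θ‖ ≤ K * ‖H.mulVecLin θ‖ := h1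
      _ ≤ K * (F θ + C) := by
          exact mul_le_mul_of_nonneg_left (hbound θ) K.coe_nonneg
      _ ≤ K * (F 0 + C) := by
          have : F θ ≤ F 0 := le_of_lt (lt_of_lt_of_le hcon hθ₀0)
          exact mul_le_mul_of_nonneg_left (by linarith) K.coe_nonneg
  have : θ ∈ Metric.closedBall (0 : Fin N → ℝ) R := by
    rwa [Metric.mem_closedBall, dist_zero_right]
  exact absurd (isMinOn_iff.mp hminon θ this) (not_le.mpr hcon)


lemma lav_descent {M N : ℕ} (H : Matrix (Fin M) (Fin N) ℝ) (z : Fin M → ℝ)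
    (hinj : Function.Injective H.mulVecLin) (θ : Fin N → ℝ)
    (hmin : ∀ θ', (∑ i, |z i - H i ⬝ᵥ θ|) ≤ ∑ i, |z i - H i ⬝ᵥ θ'|)
    (hcard : {i : Fin M | z i = H i ⬝ᵥ θ}.ncard < N) :
    ∃ θ' : Fin N → ℝ, (∀ θ'', (∑ i, |z i - H i ⬝ᵥ θ'|) ≤ ∑ i, |z i - H i ⬝ᵥ θ''|) ∧
      {i : Fin M | z i = H i ⬝ᵥ θ}.ncard < {i : Fin M | z i = H i ⬝ᵥ θ'}.ncard := by
  classical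
  set Zs : Set (Fin M) := {i : Fin M | z i = H i ⬝ᵥ θ} with hZs
  set Zf : Finset (Fin M) := (Zs.toFinite).toFinset with hZf
  set rows : Fin M → EuclideanSpace ℝ (Fin N) :=
    fun i => (WithLp.equiv 2 (Fin N → ℝ)).symm (H i) with hrows
  set p : Submodule ℝ (EuclideanSpace ℝ (Fin N)) := Submodule.span ℝ ↑(Zf.image rows) with hp
  have hfr : Module.finrank ℝ p < N := by
    have h1 : Module.finrank ℝ p ≤ (Zf.image rows).card := finrank_span_finset_le_card _
    have h2 : (Zf.image rows).card ≤ Zf.card := Finset.card_image_le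
    have h3 : Zf.card = Zs.ncard := (Set.ncard_eq_toFinset_card Zs (Zs.toFinite)).symm
    omega
  have hpne : p ≠ ⊤ := by
    intro h
    rw [h, finrank_top, finrank_euclideanSpace, Fintype.card_fin] at hfr
    omega
  obtain ⟨d, hdmem, hdne⟩ := Submodule.ne_bot_iff _ |>.mp
    (fun h => hpne (Submodule.orthogonal_eq_bot_iff.mp h))
  set d' : Fin N → ℝ := WithLp.equiv 2 (Fin N → ℝ) d with hd'
  have horth : ∀ i ∈ Zs, H i ⬝ᵥ d' = 0 := by
    intro i hi
    have hrow : rows i ∈ p := Submodule.subset_span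
      (Finset.mem_coe.mpr (Finset.mem_image_of_mem rows ((Zs.toFinite).mem_toFinset.mpr hi)))
    have := (Submodule.mem_orthogonal p d).mp hdmem (rows i) hrow
    rw [PiLp.inner_apply] at this
    simpa [hrows, dotProduct, RCLike.inner_apply, conj_trivial,
      hd', mul_comm] using this
  set a : Fin M → ℝ := fun i => H i ⬝ᵥ d' with ha
  have hex : ∃ j, a j ≠ 0 := by
    by_contra hcon
    push_neg at hcon
    apply hdne
    have : d' = 0 := hinj (by ext i; simpa [Matrix.mulVecLin_apply, Matrix.mulVec] using hcon i)
    have hd0 : d = (WithLp.equiv 2 (Fin N → ℝ)).symm d' := rfl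
    rw [hd0, this]
    rfl
  obtain ⟨j, hj⟩ := hex
  set B : Finset (Fin M) := univ.filter (fun i => a i ≠ 0) with hB
  have hBne : B.Nonempty := ⟨j, by simp [hB, hj]⟩
  obtain ⟨i₀, hi₀B, hi₀min⟩ := B.exists_min_image (fun i => |z i - H i ⬝ᵥ θ| / |a i|) hBne
  have ha₀ : a i₀ ≠ 0 := (Finset.mem_filter.mp hi₀B).2
  have hr₀ : z i₀ - H i₀ ⬝ᵥ θ ≠ 0 := by
    intro h
    exact ha₀ (horth i₀ (by simpa [hZs] using sub_eq_zero.mp h))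
  set tb : ℝ := |z i₀ - H i₀ ⬝ᵥ θ| / |a i₀| with htbdef
  have htb : 0 < tb := div_pos (abs_pos.mpr hr₀) (abs_pos.mpr ha₀)
  have hdot : ∀ (t : ℝ) i, H i ⬝ᵥ (θ + t • d') = H i ⬝ᵥ θ + t * a i := by
    intro t i
    simp [ha, dotProduct_add, dotProduct_smul, smul_eq_mul]
  have key : ∀ t : ℝ, |t| ≤ tb →
      (∑ i, |z i - H i ⬝ᵥ (θ + t • d')|) =
        (∑ i, |z i - H i ⬝ᵥ θ|) - t * ∑ i, Real.sign (z i - H i ⬝ᵥ θ) * a i := by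
    intro t ht
    rw [Finset.mul_sum, ← Finset.sum_sub_distrib]
    refine Finset.sum_congr rfl fun i _ => ?_
    rw [hdot t i]
    have h1 : z i - (H i ⬝ᵥ θ + t * a i) = (z i - H i ⬝ᵥ θ) - t * a i := by ring
    rw [h1]
    apply abs_key
    by_cases hai : a i = 0
    · simp [hai, abs_nonneg]
    · have hiB : i ∈ B := Finset.mem_filter.mpr ⟨Finset.mem_univ i, hai⟩
      have h2 := hi₀min i hiB
      have h3 : |t| * |a i| ≤ tb * |a i| :=
        mul_le_mul_of_nonneg_right ht (abs_nonneg _)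
      calc |t| * |a i| ≤ tb * |a i| := h3
        _ ≤ (|z i - H i ⬝ᵥ θ| / |a i|) * |a i| :=
            mul_le_mul_of_nonneg_right h2 (abs_nonneg _)
        _ = |z i - H i ⬝ᵥ θ| := div_mul_cancel₀ _ (abs_ne_zero.mpr hai)
  set S : ℝ := ∑ i, Real.sign (z i - H i ⬝ᵥ θ) * a i with hS
  have hS0 : S = 0 := by
    have h1 := hmin (θ + tb • d')
    rw [key tb (le_of_eq (abs_of_pos htb))] at h1
    have h2 := hmin (θ + (-tb) • d')
    rw [key (-tb) (le_of_eq (by rw [abs_neg, abs_of_pos htb]))] at h2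
    have h3 : tb * S ≤ 0 := by linarith
    have h4 : 0 ≤ tb * S := by linarith
    have := le_antisymm h3 h4
    rcases mul_eq_zero.mp this with h | h
    · exact absurd h (ne_of_gt htb)
    · exact h
  set t₀ : ℝ := (z i₀ - H i₀ ⬝ᵥ θ) / a i₀ with ht₀
  have habs : |t₀| = tb := by rw [ht₀, abs_div]
  refine ⟨θ + t₀ • d', ?_, ?_⟩
  · intro θ''
    rw [key t₀ (le_of_eq habs), hS0]
    simpa using hmin θ''
  · apply Set.ncard_lt_ncard _ (Set.toFinite _)
    rw [Set.ssubset_iff_of_subset]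
    · refine ⟨i₀, ?_, ?_⟩
      · show z i₀ = H i₀ ⬝ᵥ (θ + t₀ • d')
        rw [hdot t₀ i₀, ht₀, div_mul_cancel₀ _ ha₀]
        ring
      · show ¬ z i₀ = H i₀ ⬝ᵥ θ
        exact fun h => hr₀ (sub_eq_zero.mpr h)
    · intro i hi
      have hiZ : i ∈ Zs := hi
      show z i = H i ⬝ᵥ (θ + t₀ • d')
      rw [hdot t₀ i, show a i = 0 from horth i hiZ, mul_zero, add_zero]
      exact hiZ
theorem lav_min_full_rank_satisfies_N_measurements {M N : ℕ} (hM : 0 < M) (hN : 0 < N)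
    (hMN : N ≤ M) (H : Matrix (Fin M) (Fin N) ℝ) (z : Fin M → ℝ)
    (hrank : H.rank = N) :
    ∃ θhat : Fin N → ℝ,
      (∀ θ : Fin N → ℝ, (∑ i, |z i - H i ⬝ᵥ θhat|) ≤ ∑ i, |z i - H i ⬝ᵥ θ|) ∧
      N ≤ {i : Fin M | z i = H i ⬝ᵥ θhat}.ncard := by
  have hinj : Function.Injective H.mulVecLin := by
    rw [← LinearMap.ker_eq_bot]
    rw [← Submodule.finrank_eq_zero (R := ℝ)]
    have h1 := LinearMap.finrank_range_add_finrank_ker H.mulVecLin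
    have h2 : Module.finrank ℝ (LinearMap.range H.mulVecLin) = N := hrank
    rw [h2, Module.finrank_pi, Fintype.card_fin] at h1
    omega
  have main : ∀ k : ℕ, ∀ θ : Fin N → ℝ,
      (∀ θ', (∑ i, |z i - H i ⬝ᵥ θ|) ≤ ∑ i, |z i - H i ⬝ᵥ θ'|) →
      N - {i : Fin M | z i = H i ⬝ᵥ θ}.ncard ≤ k →
      ∃ θhat : Fin N → ℝ,
        (∀ θ' : Fin N → ℝ, (∑ i, |z i - H i ⬝ᵥ θhat|) ≤ ∑ i, |z i - H i ⬝ᵥ θ'|) ∧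
        N ≤ {i : Fin M | z i = H i ⬝ᵥ θhat}.ncard := by
    intro k
    induction k with
    | zero =>
      intro θ hminθ hle
      exact ⟨θ, hminθ, by omega⟩
    | succ k ih =>
      intro θ hminθ hle
      by_cases hc : N ≤ {i : Fin M | z i = H i ⬝ᵥ θ}.ncard
      · exact ⟨θ, hminθ, hc⟩
      · push_neg at hc
        obtain ⟨θ', hmin', hcard'⟩ := lav_descent H z hinj θ hminθ hc
        exact ih θ' hmin' (by omega)
  obtain ⟨θ₀, hmin₀⟩ := lav_exists_min H z hinj
  exact main N θ₀ hmin₀ (by omega)
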